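/- Let G be a graph with a contraction sequence (G = G_1, ..., G_n) of width d, let k be a natural number, let I be a finite set, and for each α in I let ψ_α(x_1, ..., x_k, y) be a quantifier-free first-order formula in the language of graphs. Let i in [2, n], let π be a virtual i-profile with v in T (where v is the new vertex of G_i), let f' be compatible with π, let {π_j : j in [m]} be an f'-decomposition of π, and for each j in [m] let s^j be a solution of π_j. Then s = ⊕_{j∈[m]} s^j is a solution of π; moreover, if ν_j is the value of s^j in π_j, then the value of s in π equals Σ_{j∈[m]} ν_j. -/

import Mathlib

attribute [local instance 10] Classical.propDecidable

/-- A trigraph: a finite simple graph whose edges are partitioned into black and red edges. -/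
structure Trigraph (α : Type) where
  verts : Finset α
  black : α → α → Prop
  red : α → α → Prop
  black_symm : ∀ x y, black x y → black y x
  red_symm : ∀ x y, red x y → red y x
  black_irrefl : ∀ x, ¬ black x x
  red_irrefl : ∀ x, ¬ red x x
  black_red_disjoint : ∀ x y, black x y → ¬ red x y
  black_mem : ∀ x y, black x y → x ∈ verts ∧ y ∈ verts
  red_mem : ∀ x y, red x y → x ∈ verts ∧ y ∈ verts

namespace Trigraph

/-- The red graph of a trigraph. -/
def redGraph {α : Type} (G : Trigraph α) : SimpleGraph α where
  Adj := G.red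
  symm := ⟨fun x y h => G.red_symm x y h⟩
  loopless := ⟨fun x h => G.red_irrefl x h⟩

/-- The red degree of a vertex. -/
noncomputable def redDegree {α : Type} (G : Trigraph α) (x : α) : ℕ :=
  Set.ncard {y | G.red x y}

end Trigraph

variable {α : Type} [DecidableEq α]

/-- `Contracts G G' u v w` : the trigraph `G'` is obtained from the trigraph `G` by
contracting the two distinct vertices `u, v` into the new vertex `w`. -/
def Contracts (G G' : Trigraph α) (u v w : α) : Prop :=
  u ∈ G.verts ∧ v ∈ G.verts ∧ u ≠ v ∧ w ∉ G.verts ∧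
  G'.verts = insert w (G.verts \ {u, v}) ∧
  (∀ x ∈ G.verts \ {u, v}, (G'.black w x ↔ G.black u x ∧ G.black v x)) ∧
  (∀ x ∈ G.verts \ {u, v},
    (G'.red w x ↔ (¬ (G.black u x ∧ G.black v x)) ∧
      (G.black u x ∨ G.red u x ∨ G.black v x ∨ G.red v x))) ∧
  (∀ x, x ∈ G.verts \ {u, v} → ∀ y, y ∈ G.verts \ {u, v} →
    ((G'.black x y ↔ G.black x y) ∧ (G'.red x y ↔ G.red x y)))

/-- A contraction sequence `(G = G₁, …, Gₙ)` of a graph `G` (a trigraph with no red edges),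
together with the data of the contracted vertices `cu i, cv i` and the new vertex `cw i`
at each step `i ∈ [2, n]`. -/
structure ContractionSeq (α : Type) [DecidableEq α] (n : ℕ) where
  seq : ℕ → Trigraph α
  cu : ℕ → α
  cv : ℕ → α
  cw : ℕ → α
  one_le : 1 ≤ n
  init_noRed : ∀ x y, ¬ (seq 1).red x y
  last_single : (seq n).verts.card = 1
  step : ∀ i, 2 ≤ i → i ≤ n → Contracts (seq (i - 1)) (seq i) (cu i) (cv i) (cw i)

namespace ContractionSeq

variable {n : ℕ}

/-- The contraction sequence has width `d`: every vertex of every trigraph in the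
sequence has red degree at most `d`. -/
def HasWidth (C : ContractionSeq α n) (d : ℕ) : Prop :=
  ∀ i, 1 ≤ i → i ≤ n → ∀ x, (C.seq i).redDegree x ≤ d

/-- The bag `β(u)` of a vertex `u` of `Gᵢ`: the set of vertices of `G = G₁`
contracted into `u`. -/
def bag (C : ContractionSeq α n) : ℕ → α → Finset α
  | 0, x => {x}
  | 1, x => {x}
  | i + 2, x =>
    if x = C.cw (i + 2) then bag C (i + 1) (C.cu (i + 2)) ∪ bag C (i + 1) (C.cv (i + 2))
    else bag C (i + 1) x

/-- `β(T)`, the union of the bags of the vertices in `T`. -/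
def bags (C : ContractionSeq α n) (i : ℕ) (T : Finset α) : Finset α :=
  T.biUnion (C.bag i)

end ContractionSeq

variable {n : ℕ}

/-- A basic `i`-profile `(T, D)`. -/
def IsBasicProfile (C : ContractionSeq α n) (k d i : ℕ) (T D : Finset α) : Prop :=
  T ⊆ (C.seq i).verts ∧ T.card ≤ k * (d + 1) ∧
  (SimpleGraph.induce (↑T : Set α) (C.seq i).redGraph).Connected ∧
  D ⊆ T ∧ D.card ≤ k

/-- `T' = (T \ {v}) ∪ {u₁, u₂}` where `v = cw i` is the new vertex of `Gᵢ` and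
`u₁ = cu i`, `u₂ = cv i` are the vertices contracted into it. -/
def newT (C : ContractionSeq α n) (i : ℕ) (T : Finset α) : Finset α :=
  T.erase (C.cw i) ∪ {C.cu i, C.cv i}

/-- `D' ⊆ T'` is compatible with the basic `i`-profile `(T, D)`. -/
def DCompat (C : ContractionSeq α n) (k i : ℕ) (T D D' : Finset α) : Prop :=
  D' ⊆ newT C i T ∧
  D.erase (C.cw i) = (D'.erase (C.cu i)).erase (C.cv i) ∧
  D'.card ≤ k ∧
  (C.cw i ∈ D ↔ (C.cu i ∈ D' ∨ C.cv i ∈ D'))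

/-- A `D'`-decomposition `{(T₁, D₁), …, (Tₘ, Dₘ)}` of the basic `i`-profile `(T, D)`. -/
def IsDDecomp (C : ContractionSeq α n) (k d i : ℕ) (T D D' : Finset α)
    (m : ℕ) (Tj Dj : Fin m → Finset α) : Prop :=
  (∀ j, IsBasicProfile C k d (i - 1) (Tj j) (Dj j)) ∧
  (∀ j ℓ, j ≠ ℓ → Disjoint (Tj j) (Tj ℓ)) ∧
  newT C i T = Finset.univ.biUnion Tj ∧
  D' = Finset.univ.biUnion Dj ∧
  DCompat C k i T D D' ∧
  (∀ j ℓ, j ≠ ℓ → ∀ x ∈ Tj j, ∀ y ∈ Dj ℓ, ¬ (C.seq (i - 1)).red x y)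

/-- An extended `i`-profile `(T, D, M, f)`; the function `f : T → [0, k]` is modelled as a
function `f : α → ℕ` vanishing outside `T`. -/
def IsExtProfile (C : ContractionSeq α n) (k d i : ℕ) (T D M : Finset α) (f : α → ℕ) : Prop :=
  IsBasicProfile C k d i T D ∧ M ⊆ T ∧
  (∀ u, u ∉ T → f u = 0) ∧
  (∀ u ∈ T, f u ≤ k) ∧
  (∑ u ∈ T, f u) ≤ k ∧
  (∀ u ∈ T, f u ≤ (C.bag i u).card) ∧
  D = T.filter (fun u => f u ≠ 0)

/-- A solution of an extended `i`-profile `(T, D, M, f)`. -/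
def IsSolution (C : ContractionSeq α n) (i : ℕ) (T : Finset α) (f : α → ℕ)
    (S : Finset α) : Prop :=
  S ⊆ C.bags i T ∧ ∀ u ∈ T, f u = (S ∩ C.bag i u).card

/-- The closed neighborhood `N[S]` of `S` in the graph `G = G₁`. -/
def closedNbhd (C : ContractionSeq α n) (S : Finset α) : Set α :=
  ↑S ∪ {x | ∃ y ∈ S, (C.seq 1).black x y}

/-- The dominating-set-value `|N[S] ∩ β(M)|` of a solution `S`. -/
noncomputable def dsValue (C : ContractionSeq α n) (i : ℕ) (M S : Finset α) : ℕ :=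
  Set.ncard (closedNbhd C S ∩ ↑(C.bags i M))

/-- The vertex-cover-value of a solution `S`: the number of edges of `G` with one
endpoint in `S` and the other endpoint in `β(T)`. -/
noncomputable def vcValue (C : ContractionSeq α n) (i : ℕ) (T S : Finset α) : ℕ :=
  Set.ncard {e : Sym2 α | ∃ x y, e = s(x, y) ∧ (C.seq 1).black x y ∧ x ∈ S ∧ y ∈ C.bags i T}

/-- The function `f' : T' → [0, k]` is compatible with the extended `i`-profile
`(T, D, M, f)`. -/
def FCompat (C : ContractionSeq α n) (k i : ℕ) (T : Finset α) (f f' : α → ℕ) : Prop :=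
  (∀ u, u ∉ newT C i T → f' u = 0) ∧
  (∀ u ∈ newT C i T, f' u ≤ k) ∧
  f (C.cw i) = f' (C.cu i) + f' (C.cv i) ∧
  f' (C.cu i) ≤ (C.bag (i - 1) (C.cu i)).card ∧
  f' (C.cv i) ≤ (C.bag (i - 1) (C.cv i)).card ∧
  (∀ u ∈ T.erase (C.cw i), f' u = f u)

/-- `D' = {u ∈ T' : f'(u) ≠ 0}`. -/
def Dset (C : ContractionSeq α n) (i : ℕ) (T : Finset α) (f' : α → ℕ) : Finset α :=
  (newT C i T).filter (fun u => f' u ≠ 0)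

/-- `M-hat = (M \ {v}) ∪ {u₁, u₂}` if `v ∈ M`, and `M-hat = M` otherwise. -/
def Mhat (C : ContractionSeq α n) (i : ℕ) (M : Finset α) : Finset α :=
  if C.cw i ∈ M then M.erase (C.cw i) ∪ {C.cu i, C.cv i} else M

/-- `M' = {u ∈ M-hat : u has no black neighbor in D' in G_{i-1}}`. -/
noncomputable def Mset (C : ContractionSeq α n) (i : ℕ) (M D' : Finset α) : Finset α :=
  (Mhat C i M).filter (fun u => ¬ ∃ w ∈ D', (C.seq (i - 1)).black u w)

/-- An `f'`-decomposition `{(Tⱼ, Dⱼ, Mⱼ, fⱼ) : j ∈ [m]}` of the extended `i`-profile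
`(T, D, M, f)`. -/
def IsFDecomp (C : ContractionSeq α n) (k d i : ℕ) (T D M : Finset α) (f' : α → ℕ)
    (m : ℕ) (Tj Dj Mj : Fin m → Finset α) (fj : Fin m → α → ℕ) : Prop :=
  (∀ j, IsExtProfile C k d (i - 1) (Tj j) (Dj j) (Mj j) (fj j)) ∧
  (∀ j, ∀ u ∈ Tj j, fj j u = f' u) ∧
  Dset C i T f' = Finset.univ.biUnion Dj ∧
  Mset C i M (Dset C i T f') = Finset.univ.biUnion Mj ∧
  IsDDecomp C k d i T D (Dset C i T f') m Tj Dj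

/-- The adjacency relation of the expanded graph `G_π` of a virtual profile with
context `T`, virtual vertices `Vv` and virtual edges `E`. -/
def expAdj (C : ContractionSeq α n) (i : ℕ) (T Vv : Finset α) (E : Finset (Sym2 α))
    (x y : α) : Prop :=
  (x ∈ C.bags i T ∧ y ∈ C.bags i T ∧ (C.seq 1).black x y) ∨
  (x ∈ Vv ∧ y ∈ Vv ∧ s(x, y) ∈ E) ∨
  (y ∈ Vv ∧ ∃ u ∈ T, x ∈ C.bag i u ∧ s(u, y) ∈ E) ∨
  (x ∈ Vv ∧ ∃ u ∈ T, y ∈ C.bag i u ∧ s(u, x) ∈ E)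

/-- A virtual `i`-profile `(T, D, V, E, f, H)`.  The graph `H` is given by its labeling
`h : [k] → V(H)` (so `V(H)` is the range of `h`) and its edge set `HE`. -/
def IsVirtualProfile (C : ContractionSeq α n) (k d i : ℕ)
    (T D Vv : Finset α) (E : Finset (Sym2 α)) (f h : Fin k → α)
    (HE : Finset (Sym2 α)) : Prop :=
  IsBasicProfile C k d i T D ∧
  Vv.card ≤ k ∧
  (∀ x ∈ Vv, ∀ j, 1 ≤ j → j ≤ n → x ∉ (C.seq j).verts) ∧
  (∀ e ∈ E, ∃ u w, e = s(u, w) ∧ u ∈ Vv ∪ T ∧ w ∈ Vv) ∧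
  (∀ a, f a ∈ D ∪ Vv) ∧
  (∀ x ∈ D ∪ Vv, ∃ a, f a = x) ∧
  (∀ u ∈ D, (Finset.univ.filter (fun a => f a = u)).card ≤ (C.bag i u).card) ∧
  (∀ e ∈ HE, ¬ e.IsDiag ∧ ∀ x ∈ e, ∃ a, h a = x)

/-- A solution `(s₁, …, s_k)` of a virtual `i`-profile. -/
def IsVSolution (C : ContractionSeq α n) (i k : ℕ)
    (T D Vv : Finset α) (E : Finset (Sym2 α)) (f h : Fin k → α) (HE : Finset (Sym2 α))
    (sol : Fin k → α) : Prop :=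
  (∀ a, (f a ∈ Vv → sol a = f a) ∧ (f a ∈ D → sol a ∈ C.bag i (f a))) ∧
  (∀ a b, sol a = sol b ↔ h a = h b) ∧
  (∀ a b, expAdj C i T Vv E (sol a) (sol b) ↔ s(h a, h b) ∈ HE)

/-- Quantifier-free first-order formulas in the language of graphs with free variables
`x₁, …, x_k, y` (the variable `y` being the last one). -/
inductive QF (k : ℕ) : Type where
  | eq : Fin (k + 1) → Fin (k + 1) → QF k
  | adj : Fin (k + 1) → Fin (k + 1) → QF k
  | not : QF k → QF k
  | and : QF k → QF k → QF k
  | or : QF k → QF k → QF k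

/-- Satisfaction of a quantifier-free formula under an adjacency relation `A` and a
valuation `val` of the variables. -/
def QF.Sat {β : Type} {k : ℕ} (A : β → β → Prop) (val : Fin (k + 1) → β) : QF k → Prop
  | .eq a b => val a = val b
  | .adj a b => A (val a) (val b)
  | .not φ => ¬ QF.Sat A val φ
  | .and φ ψ => QF.Sat A val φ ∧ QF.Sat A val ψ
  | .or φ ψ => QF.Sat A val φ ∨ QF.Sat A val ψ

/-- The value `Σ_{α ∈ I} |{u ∈ β(T) : G_π ⊨ ψ_α(s₁, …, s_k, u)}|` of a solution of a
virtual `i`-profile. -/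
noncomputable def vValue {I : Type} [Fintype I] {k : ℕ} (ψ : I → QF k)
    (C : ContractionSeq α n) (i : ℕ) (T Vv : Finset α) (E : Finset (Sym2 α))
    (sol : Fin k → α) : ℕ :=
  ∑ a : I, Set.ncard {u : α | u ∈ C.bags i T ∧
    QF.Sat (expAdj C i T Vv E) (Fin.snoc sol u) (ψ a)}

/-- The function `f' : [k] → T' ∪ V` is compatible with the virtual `i`-profile. -/
def VFCompat (C : ContractionSeq α n) (i k : ℕ) (f f' : Fin k → α) : Prop :=
  ∀ a, (f a = C.cw i → (f' a = C.cu i ∨ f' a = C.cv i)) ∧ (f a ≠ C.cw i → f' a = f a)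

/-- `E' = {uw ∈ E : u, w ∈ T' ∪ V} ∪ {u₁w, u₂w : vw ∈ E}`. -/
def Eprime (C : ContractionSeq α n) (i : ℕ) (T Vv : Finset α) (E : Finset (Sym2 α)) :
    Set (Sym2 α) :=
  {e | e ∈ E ∧ ∀ x ∈ e, x ∈ newT C i T ∪ Vv} ∪
  {e | ∃ w, s(C.cw i, w) ∈ E ∧ (e = s(C.cu i, w) ∨ e = s(C.cv i, w))}

/-- `D' = range(f') ∩ T'`. -/
noncomputable def rangeD {k : ℕ} (C : ContractionSeq α n) (i : ℕ) (T : Finset α)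
    (f' : Fin k → α) : Finset α :=
  (newT C i T).filter (fun u => ∃ a, f' a = u)

/-- An `f'`-decomposition `{(Tⱼ, Dⱼ, Vⱼ, Eⱼ, fⱼ, H) : j ∈ [m]}` of the virtual
`i`-profile `(T, D, V, E, f, H)`. -/
def IsVDecomp (C : ContractionSeq α n) (k d i : ℕ)
    (T D Vv : Finset α) (E : Finset (Sym2 α)) (f h : Fin k → α) (HE : Finset (Sym2 α))
    (f' : Fin k → α) (m : ℕ) (Tj Dj Vj : Fin m → Finset α)
    (Ej : Fin m → Finset (Sym2 α)) (fj : Fin m → Fin k → α) : Prop :=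
  IsDDecomp C k d i T D (rangeD C i T f') m Tj Dj ∧
  (∀ j, IsVirtualProfile C k d (i - 1) (Tj j) (Dj j) (Vj j) (Ej j) (fj j) h HE) ∧
  (∀ j, Vj j =
    Vv ∪ (Finset.univ.filter (fun a => f' a ∈ rangeD C i T f' \ Dj j)).image h) ∧
  (∀ j a, (f' a ∈ Dj j ∪ Vv → fj j a = f' a) ∧
          (f' a ∈ rangeD C i T f' \ Dj j → fj j a = h a)) ∧
  (∀ j e, e ∈ Ej j ↔
    ((e ∈ Eprime C i T Vv E ∧ ∀ x ∈ e, x ∈ Vv ∪ Tj j) ∨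
     (∃ u a, e = s(u, h a) ∧ u ∈ Vv ∪ Tj j ∧ f' a ∈ rangeD C i T f' \ Dj j ∧
        (s(u, f' a) ∈ Eprime C i T Vv E ∨ (C.seq (i - 1)).black u (f' a))) ∨
     (∃ a b, e = s(h a, h b) ∧ s(h a, h b) ∈ HE ∧
        f' a ∈ rangeD C i T f' \ Dj j ∧ f' b ∈ rangeD C i T f' \ Dj j)))

/-- `⊕_{j ∈ [m]} sⱼ = s¹ ⊕ (s² ⊕ ( … ))`, where the `a`-th entry of `s¹ ⊕ s²` is
`s¹ a` if `f₁ a ∈ D₁` and `s² a` otherwise. -/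
noncomputable def bigOplus {k : ℕ} [Nonempty α] :
    (m : ℕ) → (Fin m → Fin k → α) → (Fin m → Fin k → α) → (Fin m → Finset α) →
      Fin k → α
  | 0, _, _, _ => fun _ => Classical.arbitrary α
  | 1, sol, _, _ => sol 0
  | m + 2, sol, f, D => fun a =>
      if f 0 a ∈ D 0 then sol 0 a
      else bigOplus (m + 1) (fun j => sol j.succ) (fun j => f j.succ)
        (fun j => D j.succ) a

namespace Trigraph
lemma black_comm {α : Type} (G : Trigraph α) {u w : α} : G.black u w ↔ G.black w u :=
  ⟨G.black_symm _ _, G.black_symm _ _⟩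
lemma red_comm {α : Type} (G : Trigraph α) {u w : α} : G.red u w ↔ G.red w u :=
  ⟨G.red_symm _ _, G.red_symm _ _⟩
end Trigraph

namespace ContractionSeq

lemma bag_step (C : ContractionSeq α n) {i : ℕ} (h2 : 2 ≤ i) (x : α) :
    C.bag i x = if x = C.cw i then C.bag (i-1) (C.cu i) ∪ C.bag (i-1) (C.cv i)
      else C.bag (i-1) x := by
  obtain ⟨j, rfl⟩ : ∃ j, i = j + 2 := ⟨i - 2, by omega⟩
  have : j + 2 - 1 = j + 1 := rfl
  rw [this]
  simp only [ContractionSeq.bag]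

lemma bag_subset_verts (C : ContractionSeq α n) :
    ∀ i, 1 ≤ i → i ≤ n → ∀ u ∈ (C.seq i).verts, C.bag i u ⊆ (C.seq 1).verts := by
  intro i h1
  induction i, h1 using Nat.le_induction with
  | base =>
    intro _ u hu
    simp only [ContractionSeq.bag, Finset.singleton_subset_iff]
    exact hu
  | succ i h1 ih =>
    intro hin u hu
    have hi : i ≤ n := by omega
    obtain ⟨hc1, hc2, hcc, hcw, hverts, -, -, -⟩ := C.step (i+1) (by omega) hin
    have hb := C.bag_step (i := i + 1) (by omega)
    simp only [Nat.add_sub_cancel] at hb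
    rw [hb]
    by_cases hcase : u = C.cw (i+1)
    · simp only [hcase, if_pos rfl]
      exact Finset.union_subset (ih hi _ hc1) (ih hi _ hc2)
    · rw [if_neg hcase]
      have : u ∈ (C.seq i).verts := by
        rw [hverts] at hu
        simp only [Finset.mem_insert, Finset.mem_sdiff] at hu
        rcases hu with h | h
        · exact absurd h hcase
        · exact h.1
      exact ih hi _ this

lemma bag_disjoint (C : ContractionSeq α n) :
    ∀ i, 1 ≤ i → i ≤ n → ∀ u ∈ (C.seq i).verts, ∀ w ∈ (C.seq i).verts, u ≠ w →
      Disjoint (C.bag i u) (C.bag i w) := by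
  intro i h1
  induction i, h1 using Nat.le_induction with
  | base =>
    intro _ u _ w _ huw
    simp only [ContractionSeq.bag]
    simpa using fun h => huw h
  | succ i h1 ih =>
    intro hin u hu w hw huw
    have hi : i ≤ n := by omega
    obtain ⟨hc1, hc2, hcc, hcw, hverts, -, -, -⟩ := C.step (i+1) (by omega) hin
    have hb := C.bag_step (i := i + 1) (by omega)
    simp only [Nat.add_sub_cancel] at hb
    have hmem : ∀ x ∈ (C.seq (i+1)).verts, x ≠ C.cw (i+1) →
        x ∈ (C.seq i).verts ∧ x ≠ C.cu (i+1) ∧ x ≠ C.cv (i+1) := by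
      intro x hx hxcw
      rw [hverts] at hx
      simp only [Finset.mem_insert, Finset.mem_sdiff, Finset.mem_insert,
        Finset.mem_singleton] at hx
      rcases hx with h | h
      · exact absurd h hxcw
      · exact ⟨h.1, fun h' => h.2 (Or.inl h'), fun h' => h.2 (Or.inr h')⟩
    rw [hb, hb]
    by_cases hucase : u = C.cw (i+1)
    · have hwcase : w ≠ C.cw (i+1) := by rw [hucase] at huw; exact fun h => huw h.symm
      obtain ⟨hw', hwu, hwv⟩ := hmem w hw hwcase
      rw [if_pos hucase, if_neg hwcase]
      exact Finset.disjoint_union_left.2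
        ⟨ih hi _ hc1 _ hw' (fun h => hwu h.symm), ih hi _ hc2 _ hw' (fun h => hwv h.symm)⟩
    · rw [if_neg hucase]
      obtain ⟨hu', huu, huv⟩ := hmem u hu hucase
      by_cases hwcase : w = C.cw (i+1)
      · rw [if_pos hwcase]
        exact Finset.disjoint_union_right.2 ⟨ih hi _ hu' _ hc1 huu, ih hi _ hu' _ hc2 huv⟩
      · rw [if_neg hwcase]
        obtain ⟨hw', -, -⟩ := hmem w hw hwcase
        exact ih hi _ hu' _ hw' huw

lemma bag_nonempty (C : ContractionSeq α n) : ∀ (i : ℕ) (x : α), (C.bag i x).Nonempty := by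
  intro i
  induction i using Nat.strong_induction_on with
  | _ i ih =>
    intro x
    match i with
    | 0 => exact ⟨x, by simp [ContractionSeq.bag]⟩
    | 1 => exact ⟨x, by simp [ContractionSeq.bag]⟩
    | (j+2) =>
      simp only [ContractionSeq.bag]
      split
      · exact Finset.Nonempty.mono Finset.subset_union_left (ih (j+1) (by omega) _)
      · exact ih (j+1) (by omega) _

end ContractionSeq

private lemma prop_aux {b1 r1 b2 r2 : Prop} :
    ((b1 ∧ b2) ∨ (¬(b1 ∧ b2) ∧ (b1 ∨ r1 ∨ b2 ∨ r2))) ↔ ((b1 ∨ r1) ∨ (b2 ∨ r2)) := by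
  tauto

namespace ContractionSeq

set_option maxHeartbeats 1000000 in

lemma bag_black (C : ContractionSeq α n) :
    ∀ i, 1 ≤ i → i ≤ n → ∀ u ∈ (C.seq i).verts, ∀ w ∈ (C.seq i).verts, u ≠ w →
      (((C.seq i).black u w ↔ ∀ x ∈ C.bag i u, ∀ y ∈ C.bag i w, (C.seq 1).black x y) ∧
       (((C.seq i).black u w ∨ (C.seq i).red u w) ↔
         ∃ x ∈ C.bag i u, ∃ y ∈ C.bag i w, (C.seq 1).black x y)) := by
  intro i h1
  induction i, h1 using Nat.le_induction with
  | base =>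
    intro _ u _ w _ huw
    simp only [ContractionSeq.bag, Finset.mem_singleton, forall_eq, exists_eq_left]
    constructor
    · constructor
    · constructor
      · rintro (hb | hr)
        · exact hb
        · exact absurd hr (C.init_noRed u w)
      · exact Or.inl
  | succ i h1 ih =>
    intro hin u hu w hw huw
    have hi : i ≤ n := by omega
    obtain ⟨hc1, hc2, hcc, hcw, hverts, hblackw, hredw, hold⟩ := C.step (i+1) (by omega) hin
    simp only [Nat.add_sub_cancel] at hc1 hc2 hcw hverts hblackw hredw hold
    have hb := C.bag_step (i := i + 1) (by omega)
    simp only [Nat.add_sub_cancel] at hb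
    have hmem : ∀ x ∈ (C.seq (i+1)).verts, x ≠ C.cw (i+1) →
        x ∈ (C.seq i).verts \ {C.cu (i+1), C.cv (i+1)} := by
      intro x hx hxcw
      rw [hverts] at hx
      simp only [Finset.mem_insert] at hx
      rcases hx with h | h
      · exact absurd h hxcw
      · exact h
    -- key case : u is the new vertex
    have key : ∀ w ∈ (C.seq (i+1)).verts, w ≠ C.cw (i+1) →
        (((C.seq (i+1)).black (C.cw (i+1)) w ↔
            ∀ x ∈ C.bag (i+1) (C.cw (i+1)), ∀ y ∈ C.bag (i+1) w, (C.seq 1).black x y) ∧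
         (((C.seq (i+1)).black (C.cw (i+1)) w ∨ (C.seq (i+1)).red (C.cw (i+1)) w) ↔
           ∃ x ∈ C.bag (i+1) (C.cw (i+1)), ∃ y ∈ C.bag (i+1) w, (C.seq 1).black x y)) := by
      intro w hw hwcw
      have hw' := hmem w hw hwcw
      have hw'' : w ∈ (C.seq i).verts := (Finset.mem_sdiff.1 hw').1
      have hwu : C.cu (i+1) ≠ w := by
        intro h; apply (Finset.mem_sdiff.1 hw').2; simp [← h]
      have hwv : C.cv (i+1) ≠ w := by
        intro h; apply (Finset.mem_sdiff.1 hw').2; simp [← h]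
      have ih1 := ih hi _ hc1 _ hw'' hwu
      have ih2 := ih hi _ hc2 _ hw'' hwv
      rw [hb (C.cw (i+1)), hb w, if_pos rfl, if_neg hwcw]
      constructor
      · rw [hblackw w hw', ih1.1, ih2.1]
        constructor
        · rintro ⟨hA, hB⟩ x hx
          rcases Finset.mem_union.1 hx with h | h
          · exact hA x h
          · exact hB x h
        · intro hAB
          exact ⟨fun x hx => hAB x (Finset.mem_union_left _ hx),
                 fun x hx => hAB x (Finset.mem_union_right _ hx)⟩
      · have hiff : ((C.seq (i+1)).black (C.cw (i+1)) w ∨ (C.seq (i+1)).red (C.cw (i+1)) w)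
            ↔ (((C.seq i).black (C.cu (i+1)) w ∨ (C.seq i).red (C.cu (i+1)) w) ∨
               ((C.seq i).black (C.cv (i+1)) w ∨ (C.seq i).red (C.cv (i+1)) w)) := by
          rw [hblackw w hw', hredw w hw']
          exact prop_aux
        rw [hiff, ih1.2, ih2.2]
        constructor
        · rintro (⟨x, hx, hxy⟩ | ⟨x, hx, hxy⟩)
          · exact ⟨x, Finset.mem_union_left _ hx, hxy⟩
          · exact ⟨x, Finset.mem_union_right _ hx, hxy⟩
        · rintro ⟨x, hx, hxy⟩
          rcases Finset.mem_union.1 hx with h | h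
          · exact Or.inl ⟨x, h, hxy⟩
          · exact Or.inr ⟨x, h, hxy⟩
    by_cases hucase : u = C.cw (i+1)
    · subst hucase
      exact key w hw (fun h => huw h.symm)
    · by_cases hwcase : w = C.cw (i+1)
      · subst hwcase
        obtain ⟨k1, k2⟩ := key u hu hucase
        constructor
        · rw [(C.seq (i+1)).black_comm, k1]
          constructor
          · intro H x hx y hy
            exact (C.seq 1).black_symm _ _ (H y hy x hx)
          · intro H x hx y hy
            exact (C.seq 1).black_symm _ _ (H y hy x hx)
        · rw [(C.seq (i+1)).black_comm, (C.seq (i+1)).red_comm, k2]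
          constructor
          · rintro ⟨x, hx, y, hy, hxy⟩
            exact ⟨y, hy, x, hx, (C.seq 1).black_symm _ _ hxy⟩
          · rintro ⟨x, hx, y, hy, hxy⟩
            exact ⟨y, hy, x, hx, (C.seq 1).black_symm _ _ hxy⟩
      · have hu' := hmem u hu hucase
        have hw' := hmem w hw hwcase
        obtain ⟨hbo, hro⟩ := hold u hu' w hw'
        rw [hb u, hb w, if_neg hucase, if_neg hwcase, hbo, hro]
        exact ih hi _ (Finset.mem_sdiff.1 hu').1 _ (Finset.mem_sdiff.1 hw').1 huw

end ContractionSeq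

lemma bigOplus_eq_const {k : ℕ} [Nonempty α] :
    ∀ (m : ℕ) (sol f : Fin m → Fin k → α) (D : Fin m → Finset α) (a : Fin k) (c : α),
      0 < m → (∀ j, sol j a = c) → (∀ j, f j a ∉ D j) →
      bigOplus m sol f D a = c := by
  intro m
  induction m with
  | zero => intro _ _ _ _ _ h; omega
  | succ m ih =>
    intro sol f D a c _ hs hn
    match m with
    | 0 => exact hs 0
    | m + 1 =>
      show (if f 0 a ∈ D 0 then sol 0 a
        else bigOplus (m+1) (fun j => sol j.succ) (fun j => f j.succ) (fun j => D j.succ) a) = c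
      rw [if_neg (hn 0)]
      exact ih _ _ _ a c (by omega) (fun j => hs j.succ) (fun j => hn j.succ)

lemma bigOplus_eq_of_mem {k : ℕ} [Nonempty α] :
    ∀ (m : ℕ) (sol f : Fin m → Fin k → α) (D : Fin m → Finset α) (a : Fin k) (j₀ : Fin m),
      f j₀ a ∈ D j₀ → (∀ j, j ≠ j₀ → f j a ∉ D j) →
      bigOplus m sol f D a = sol j₀ a := by
  intro m
  induction m with
  | zero => intro _ _ _ _ j₀; exact absurd j₀.2 (by omega)
  | succ m ih =>
    intro sol f D a j₀ hmem hnot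
    match m with
    | 0 =>
      have hj : j₀ = 0 := Fin.fin_one_eq_zero j₀
      subst hj; rfl
    | m + 1 =>
      by_cases h0 : f 0 a ∈ D 0
      · have hj : j₀ = 0 := by
          by_contra hne
          exact hnot 0 (fun h => hne h.symm) h0
        subst hj
        show (if f 0 a ∈ D 0 then sol 0 a
          else bigOplus (m+1) (fun j => sol j.succ) (fun j => f j.succ) (fun j => D j.succ) a)
            = sol 0 a
        rw [if_pos h0]
      · have hj : j₀ ≠ 0 := fun h => h0 (h ▸ hmem)
        obtain ⟨j', rfl⟩ : ∃ j', j₀ = j'.succ := ⟨j₀.pred hj, (Fin.succ_pred _ _).symm⟩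
        show (if f 0 a ∈ D 0 then sol 0 a
          else bigOplus (m+1) (fun j => sol j.succ) (fun j => f j.succ) (fun j => D j.succ) a)
            = sol j'.succ a
        rw [if_neg h0]
        exact ih _ _ _ a j' hmem
          (fun j hj2 => hnot j.succ (fun hc => hj2 (Fin.succ_injective _ hc)))

lemma expAdj_symm (C : ContractionSeq α n) (i : ℕ) (T Vv : Finset α) (E : Finset (Sym2 α))
    {x y : α} (hxy : expAdj C i T Vv E x y) : expAdj C i T Vv E y x := by
  rcases hxy with ⟨h1, h2, h3⟩ | ⟨h1, h2, h3⟩ | h | h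
  · exact Or.inl ⟨h2, h1, (C.seq 1).black_symm _ _ h3⟩
  · exact Or.inr (Or.inl ⟨h2, h1, by rwa [Sym2.eq_swap]⟩)
  · exact Or.inr (Or.inr (Or.inr h))
  · exact Or.inr (Or.inr (Or.inl h))

lemma expAdj_comm (C : ContractionSeq α n) (i : ℕ) (T Vv : Finset α) (E : Finset (Sym2 α))
    (x y : α) : expAdj C i T Vv E x y ↔ expAdj C i T Vv E y x :=
  ⟨expAdj_symm C i T Vv E, expAdj_symm C i T Vv E⟩

lemma QF.Sat_congr {β γ : Type} {k : ℕ} {A : β → β → Prop} {A' : γ → γ → Prop}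
    {val : Fin (k+1) → β} {val' : Fin (k+1) → γ}
    (heq : ∀ ξ η, (val ξ = val η ↔ val' ξ = val' η))
    (hadj : ∀ ξ η, (A (val ξ) (val η) ↔ A' (val' ξ) (val' η))) :
    ∀ φ : QF k, (QF.Sat A val φ ↔ QF.Sat A' val' φ) := by
  intro φ
  induction φ with
  | eq a b => exact heq a b
  | adj a b => exact hadj a b
  | not φ ih => exact not_congr ih
  | and φ ψ ih1 ih2 => exact and_congr ih1 ih2
  | or φ ψ ih1 ih2 => exact or_congr ih1 ih2

lemma expAdj_real_real (C : ContractionSeq α n) (i : ℕ) (W Vv : Finset α) (E : Finset (Sym2 α))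
    (hW : C.bags i W ⊆ (C.seq 1).verts) (hVv : ∀ p ∈ Vv, p ∉ (C.seq 1).verts)
    {x y : α} (hx : x ∈ C.bags i W) (hy : y ∈ C.bags i W) :
    expAdj C i W Vv E x y ↔ (C.seq 1).black x y := by
  constructor
  · intro hadj
    rcases hadj with ⟨-, -, hb⟩ | ⟨hxV, -, -⟩ | ⟨hyV, -⟩ | ⟨hxV, -⟩
    · exact hb
    · exact absurd (hW hx) (hVv _ hxV)
    · exact absurd (hW hy) (hVv _ hyV)
    · exact absurd (hW hx) (hVv _ hxV)
  · intro hb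
    exact Or.inl ⟨hx, hy, hb⟩

lemma expAdj_real_virt (C : ContractionSeq α n) (i : ℕ) (W Vv : Finset α) (E : Finset (Sym2 α))
    (hW : C.bags i W ⊆ (C.seq 1).verts) (hVv : ∀ p ∈ Vv, p ∉ (C.seq 1).verts)
    {x p : α} (hx : x ∈ C.bags i W) (hp : p ∈ Vv) :
    expAdj C i W Vv E x p ↔ ∃ u ∈ W, x ∈ C.bag i u ∧ s(u, p) ∈ E := by
  constructor
  · intro hadj
    rcases hadj with ⟨-, hp', -⟩ | ⟨hxV, -, -⟩ | ⟨-, u, hu, hxu, he⟩ | ⟨hxV, -⟩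
    · exact absurd (hW hp') (hVv _ hp)
    · exact absurd (hW hx) (hVv _ hxV)
    · exact ⟨u, hu, hxu, he⟩
    · exact absurd (hW hx) (hVv _ hxV)
  · rintro ⟨u, hu, hxu, he⟩
    exact Or.inr (Or.inr (Or.inl ⟨hp, u, hu, hxu, he⟩))

lemma expAdj_virt_virt (C : ContractionSeq α n) (i : ℕ) (W Vv : Finset α) (E : Finset (Sym2 α))
    (hW : C.bags i W ⊆ (C.seq 1).verts) (hVv : ∀ p ∈ Vv, p ∉ (C.seq 1).verts)
    {p q : α} (hp : p ∈ Vv) (hq : q ∈ Vv) :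
    expAdj C i W Vv E p q ↔ s(p, q) ∈ E := by
  constructor
  · intro hadj
    rcases hadj with ⟨hp', -, -⟩ | ⟨-, -, he⟩ | ⟨-, u, hu, hpu, -⟩ | ⟨-, u, hu, hqu, -⟩
    · exact absurd (hW hp') (hVv _ hp)
    · exact he
    · exact absurd (hW (show p ∈ C.bags i W from Finset.mem_biUnion.2 ⟨u, hu, hpu⟩)) (hVv _ hp)
    · exact absurd (hW (show q ∈ C.bags i W from Finset.mem_biUnion.2 ⟨u, hu, hqu⟩)) (hVv _ hq)
  · intro he
    exact Or.inr (Or.inl ⟨hp, hq, he⟩)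

set_option maxHeartbeats 2000000 in
/-- (Lemma 14.) Combining solutions of the profiles of an
`f'`-decomposition of a virtual `i`-profile `π` with `⊕` yields a solution of `π`,
whose value is the sum of the values of the combined solutions. -/
theorem oplus_solution {α : Type} [DecidableEq α] [Nonempty α] {n : ℕ}
    (C : ContractionSeq α n) (d k : ℕ) (hW : C.HasWidth d)
    {I : Type} [Fintype I] (ψ : I → QF k)
    (i : ℕ) (h2 : 2 ≤ i) (hin : i ≤ n)
    (T D Vv : Finset α) (E : Finset (Sym2 α)) (f h : Fin k → α)
    (HE : Finset (Sym2 α))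
    (hπ : IsVirtualProfile C k d i T D Vv E f h HE) (hv : C.cw i ∈ T)
    (f' : Fin k → α) (hf' : VFCompat C i k f f')
    (m : ℕ) (Tj Dj Vj : Fin m → Finset α) (Ej : Fin m → Finset (Sym2 α))
    (fj : Fin m → Fin k → α)
    (hdec : IsVDecomp C k d i T D Vv E f h HE f' m Tj Dj Vj Ej fj)
    (sj : Fin m → Fin k → α)
    (hsj : ∀ j, IsVSolution C (i - 1) k (Tj j) (Dj j) (Vj j) (Ej j) (fj j) h HE (sj j))
    (νj : Fin m → ℕ)
    (hν : ∀ j, νj j = vValue ψ C (i - 1) (Tj j) (Vj j) (Ej j) (sj j)) :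
    IsVSolution C i k T D Vv E f h HE (bigOplus m sj fj Dj) ∧
    vValue ψ C i T Vv E (bigOplus m sj fj Dj) = ∑ j, νj j := by
  classical
  obtain ⟨hBP, hVvcard, hVvverts, hEshape, hfD, hfsurj, hfcard, hHEshape⟩ := hπ
  obtain ⟨⟨hbp, hTdisj, hTcover, hDcover, hDC, hnored⟩, hvp, hVj, hfjc, hEj⟩ := hdec
  obtain ⟨hc1, hc2, hcc, hcwmem, hverts, hblackw, hredw, hold⟩ := C.step i h2 hin
  have h1n : 1 ≤ n := C.one_le
  have hi1 : 1 ≤ i - 1 := by omega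
  have hin1 : i - 1 ≤ n := by omega
  have hTsub : T ⊆ (C.seq i).verts := hBP.1
  have hDT : D ⊆ T := hBP.2.2.2.1
  set ss := bigOplus m sj fj Dj with hss_def
  set D' := rangeD C i T f' with hD'_def
  have hcwvi : C.cw i ∈ (C.seq i).verts := hTsub hv
  have hcui : C.cu i ∉ (C.seq i).verts := by
    rw [hverts]
    intro hmem
    rcases Finset.mem_insert.1 hmem with hh | hh
    · exact hcwmem (hh ▸ hc1)
    · exact (Finset.mem_sdiff.1 hh).2 (by simp)
  have hcvi : C.cv i ∉ (C.seq i).verts := by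
    rw [hverts]
    intro hmem
    rcases Finset.mem_insert.1 hmem with hh | hh
    · exact hcwmem (hh ▸ hc2)
    · exact (Finset.mem_sdiff.1 hh).2 (by simp)
  have hnewT_sub : newT C i T ⊆ (C.seq (i-1)).verts := by
    intro u hu
    rcases Finset.mem_union.1 hu with hh | hh
    · have huT := Finset.mem_of_mem_erase hh
      have hune := Finset.ne_of_mem_erase hh
      have hin2 := hTsub huT
      rw [hverts] at hin2
      rcases Finset.mem_insert.1 hin2 with h' | h'
      · exact absurd h' hune
      · exact (Finset.mem_sdiff.1 h').1
    · rcases Finset.mem_insert.1 hh with h' | h'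
      · exact h' ▸ hc1
      · exact (Finset.mem_singleton.1 h') ▸ hc2
  have hcu_newT : C.cu i ∈ newT C i T := Finset.mem_union_right _ (by simp)
  have hcv_newT : C.cv i ∈ newT C i T := Finset.mem_union_right _ (by simp)
  have hm : 0 < m := by
    have hh := hcu_newT
    rw [hTcover] at hh
    obtain ⟨j, -, -⟩ := Finset.mem_biUnion.1 hh
    exact j.pos
  have hTjv : ∀ j, Tj j ⊆ (C.seq (i-1)).verts := fun j => (hbp j).1
  have hDjTj : ∀ j, Dj j ⊆ Tj j := fun j => (hbp j).2.2.2.1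
  have hDj_disj : ∀ j ℓ, j ≠ ℓ → Disjoint (Dj j) (Dj ℓ) :=
    fun j ℓ hne => (hTdisj j ℓ hne).mono (hDjTj j) (hDjTj ℓ)
  have hDj_D' : ∀ j, Dj j ⊆ D' := by
    intro j
    rw [hDcover]
    exact Finset.subset_biUnion_of_mem _ (Finset.mem_univ j)
  have hD'newT : D' ⊆ newT C i T := Finset.filter_subset _ _
  have hD'verts : D' ⊆ (C.seq (i-1)).verts := hD'newT.trans hnewT_sub
  have hVv1 : ∀ p ∈ Vv, p ∉ (C.seq 1).verts := fun p hp => hVvverts p hp 1 le_rfl h1n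
  have hVvim1 : ∀ p ∈ Vv, p ∉ (C.seq (i-1)).verts := fun p hp => hVvverts p hp (i-1) hi1 hin1
  have hVvii : ∀ p ∈ Vv, p ∉ (C.seq i).verts := fun p hp => hVvverts p hp i (by omega) hin
  have hVjnverts : ∀ j, ∀ p ∈ Vj j, p ∉ (C.seq 1).verts ∧ p ∉ (C.seq (i-1)).verts :=
    fun j p hp => ⟨(hvp j).2.2.1 p hp 1 le_rfl h1n, (hvp j).2.2.1 p hp (i-1) hi1 hin1⟩
  have hVvsubVj : ∀ j, Vv ⊆ Vj j := fun j => by rw [hVj j]; exact Finset.subset_union_left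
  have hhmemVj : ∀ j (a : Fin k), f' a ∈ D' \ Dj j → h a ∈ Vj j := fun j a ha => by
    rw [hVj j]
    exact Finset.mem_union_right _
      (Finset.mem_image.2 ⟨a, Finset.mem_filter.2 ⟨Finset.mem_univ _, ha⟩, rfl⟩)
  have hhnotverts : ∀ (a : Fin k) j, f' a ∈ D' \ Dj j →
      h a ∉ (C.seq 1).verts ∧ h a ∉ (C.seq (i-1)).verts :=
    fun a j ha => hVjnverts j _ (hhmemVj j a ha)
  -- bags facts
  have hmemb : ∀ (lv : ℕ) (W : Finset α) (x : α), x ∈ C.bags lv W ↔ ∃ u ∈ W, x ∈ C.bag lv u :=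
    fun lv W x => Finset.mem_biUnion
  have hbag_sub1' : ∀ u ∈ (C.seq (i-1)).verts, C.bag (i-1) u ⊆ (C.seq 1).verts :=
    C.bag_subset_verts (i-1) hi1 hin1
  have hbags_sub1 : C.bags i T ⊆ (C.seq 1).verts := by
    intro x hx
    obtain ⟨u, huT, hxu⟩ := (hmemb i T x).1 hx
    exact C.bag_subset_verts i (by omega) hin u (hTsub huT) hxu
  have hbagsTj_sub1 : ∀ j, C.bags (i-1) (Tj j) ⊆ (C.seq 1).verts := by
    intro j x hx
    obtain ⟨u, huT, hxu⟩ := (hmemb (i-1) (Tj j) x).1 hx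
    exact hbag_sub1' u (hTjv j huT) hxu
  have hstepbag : ∀ x, C.bag i x = if x = C.cw i then
      C.bag (i-1) (C.cu i) ∪ C.bag (i-1) (C.cv i) else C.bag (i-1) x :=
    fun x => C.bag_step h2 x
  have hbagsTeq : C.bags i T = C.bags (i-1) (newT C i T) := by
    ext x
    rw [hmemb, hmemb]
    constructor
    · rintro ⟨u, huT, hx⟩
      rw [hstepbag u] at hx
      by_cases hu : u = C.cw i
      · rw [if_pos hu] at hx
        rcases Finset.mem_union.1 hx with hh | hh
        · exact ⟨C.cu i, hcu_newT, hh⟩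
        · exact ⟨C.cv i, hcv_newT, hh⟩
      · rw [if_neg hu] at hx
        exact ⟨u, Finset.mem_union_left _ (Finset.mem_erase.2 ⟨hu, huT⟩), hx⟩
    · rintro ⟨u, hu, hx⟩
      rcases Finset.mem_union.1 hu with hh | hh
      · refine ⟨u, Finset.mem_of_mem_erase hh, ?_⟩
        rw [hstepbag u, if_neg (Finset.ne_of_mem_erase hh)]
        exact hx
      · refine ⟨C.cw i, hv, ?_⟩
        rw [hstepbag _, if_pos rfl]
        rcases Finset.mem_insert.1 hh with h' | h'
        · exact Finset.mem_union_left _ (h' ▸ hx)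
        · exact Finset.mem_union_right _ ((Finset.mem_singleton.1 h') ▸ hx)
  have hbags_biUnion : C.bags (i-1) (newT C i T) =
      Finset.univ.biUnion (fun j => C.bags (i-1) (Tj j)) := by
    rw [hTcover]
    ext x
    rw [hmemb]
    simp only [Finset.mem_biUnion, Finset.mem_univ, true_and]
    constructor
    · rintro ⟨u, hu, hx⟩
      obtain ⟨j, hj⟩ := hu
      exact ⟨j, (hmemb _ _ _).2 ⟨u, hj, hx⟩⟩
    · rintro ⟨j, hx⟩
      obtain ⟨u, hu, hxu⟩ := (hmemb _ _ _).1 hx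
      exact ⟨u, ⟨j, hu⟩, hxu⟩
  have hbagsTj_subT : ∀ j, C.bags (i-1) (Tj j) ⊆ C.bags i T := by
    intro j
    rw [hbagsTeq, hbags_biUnion]
    exact Finset.subset_biUnion_of_mem (fun j => C.bags (i-1) (Tj j)) (Finset.mem_univ j)
  have huniq : ∀ u ∈ (C.seq (i-1)).verts, ∀ w ∈ (C.seq (i-1)).verts, ∀ x : α,
      x ∈ C.bag (i-1) u → x ∈ C.bag (i-1) w → u = w := by
    intro u hu w hw x hxu hxw
    by_contra hne
    exact Finset.disjoint_left.1 (C.bag_disjoint (i-1) hi1 hin1 u hu w hw hne) hxu hxw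
  have huniqi : ∀ u ∈ (C.seq i).verts, ∀ w ∈ (C.seq i).verts, ∀ x : α,
      x ∈ C.bag i u → x ∈ C.bag i w → u = w := by
    intro u hu w hw x hxu hxw
    by_contra hne
    exact Finset.disjoint_left.1 (C.bag_disjoint i (by omega) hin u hu w hw hne) hxu hxw
  have hblack_iff : ∀ u ∈ (C.seq (i-1)).verts, ∀ w ∈ (C.seq (i-1)).verts, u ≠ w →
      ¬ (C.seq (i-1)).red u w →
      ∀ x ∈ C.bag (i-1) u, ∀ y ∈ C.bag (i-1) w,
        ((C.seq 1).black x y ↔ (C.seq (i-1)).black u w) := by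
    intro u hu w hw hne hnr x hx y hy
    obtain ⟨hbk, hbr⟩ := C.bag_black (i-1) hi1 hin1 u hu w hw hne
    constructor
    · intro hxy
      rcases hbr.2 ⟨x, hx, y, hy, hxy⟩ with hh | hh
      · exact hh
      · exact absurd hh hnr
    · intro hb
      exact hbk.1 hb x hx y hy
  -- case analysis on variables
  have hDV : ∀ a : Fin k, (f a ∈ D ∧ f a ∉ Vv) ∨ (f a ∈ Vv ∧ f a ∉ D) := by
    intro a
    rcases Finset.mem_union.1 (hfD a) with hh | hh
    · exact Or.inl ⟨hh, fun hc => hVvii _ hc (hTsub (hDT hh))⟩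
    · exact Or.inr ⟨hh, fun hc => hVvii _ hh (hTsub (hDT hc))⟩
  have hcaseV : ∀ a : Fin k, f a ∈ Vv →
      (f' a = f a ∧ (∀ j, fj j a = f a ∧ sj j a = f a) ∧ ss a = f a) := by
    intro a hfa
    have hne : f a ≠ C.cw i := fun hh => hVvii _ hfa (hh ▸ hcwvi)
    have hf'a : f' a = f a := (hf' a).2 hne
    have hjs : ∀ j, fj j a = f a ∧ sj j a = f a := by
      intro j
      have h1 : fj j a = f' a := (hfjc j a).1 (by rw [hf'a]; exact Finset.mem_union_right _ hfa)
      have hfeq : fj j a = f a := by rw [h1, hf'a]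
      refine ⟨hfeq, ?_⟩
      have hmem : fj j a ∈ Vj j := by rw [hfeq]; exact hVvsubVj j hfa
      rw [((hsj j).1 a).1 hmem, hfeq]
    refine ⟨hf'a, hjs, ?_⟩
    refine bigOplus_eq_const m sj fj Dj a (f a) hm (fun j => (hjs j).2) (fun j => ?_)
    rw [(hjs j).1]
    exact fun hmem => hVvim1 _ hfa (hTjv j (hDjTj j hmem))
  have hcaseD : ∀ a : Fin k, f a ∈ D → ∃ j₀, f' a ∈ Dj j₀ ∧ f' a ∈ D' ∧ fj j₀ a = f' a ∧
      ss a = sj j₀ a ∧ sj j₀ a ∈ C.bag (i-1) (f' a) ∧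
      (∀ j, j ≠ j₀ → fj j a = h a ∧ sj j a = h a ∧ f' a ∈ D' \ Dj j) := by
    intro a hfa
    have hf'newT : f' a ∈ newT C i T := by
      by_cases hcw : f a = C.cw i
      · rcases (hf' a).1 hcw with hh | hh
        · rw [hh]; exact hcu_newT
        · rw [hh]; exact hcv_newT
      · rw [(hf' a).2 hcw]
        exact Finset.mem_union_left _ (Finset.mem_erase.2 ⟨hcw, hDT hfa⟩)
    have hf'D' : f' a ∈ D' := Finset.mem_filter.2 ⟨hf'newT, ⟨a, rfl⟩⟩
    have hmem2 : f' a ∈ Finset.univ.biUnion Dj := by rw [← hDcover]; exact hf'D'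
    obtain ⟨j₀, -, hj₀⟩ := Finset.mem_biUnion.1 hmem2
    have hother : ∀ j, j ≠ j₀ → fj j a = h a ∧ sj j a = h a ∧ f' a ∈ D' \ Dj j := by
      intro j hne
      have hnot : f' a ∉ Dj j := fun hmem =>
        Finset.disjoint_left.1 (hDj_disj j j₀ hne) hmem hj₀
      have hIn : f' a ∈ D' \ Dj j := Finset.mem_sdiff.2 ⟨hf'D', hnot⟩
      have hfja : fj j a = h a := (hfjc j a).2 hIn
      have hha : fj j a ∈ Vj j := by rw [hfja]; exact hhmemVj j a hIn
      exact ⟨hfja, by rw [((hsj j).1 a).1 hha, hfja], hIn⟩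
    have hfj₀ : fj j₀ a = f' a := (hfjc j₀ a).1 (Finset.mem_union_left _ hj₀)
    have hsolm : sj j₀ a ∈ C.bag (i-1) (f' a) := by
      have := ((hsj j₀).1 a).2 (by rw [hfj₀]; exact hj₀)
      rwa [hfj₀] at this
    have hs_eq : ss a = sj j₀ a := by
      refine bigOplus_eq_of_mem m sj fj Dj a j₀ (by rw [hfj₀]; exact hj₀) (fun j hne => ?_)
      rw [(hother j hne).1]
      exact fun hmem => (hhnotverts a j (hother j hne).2.2).2 (hTjv j (hDjTj j hmem))
    exact ⟨j₀, hj₀, hf'D', hfj₀, hs_eq, hsolm, hother⟩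
  -- edge shape facts
  have hEprime_mem : ∀ e : Sym2 α, e ∈ Eprime C i T Vv E ↔
      ((e ∈ E ∧ ∀ x ∈ e, x ∈ newT C i T ∪ Vv) ∨
       (∃ w, s(C.cw i, w) ∈ E ∧ (e = s(C.cu i, w) ∨ e = s(C.cv i, w)))) := fun e => Iff.rfl
  have hEmem : ∀ p q : α, s(p,q) ∈ E → (p ∈ Vv ∪ T ∧ q ∈ Vv) ∨ (q ∈ Vv ∪ T ∧ p ∈ Vv) := by
    intro p q hpq
    obtain ⟨u, w, he, hu, hw⟩ := hEshape _ hpq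
    rw [Sym2.eq_iff] at he
    rcases he with ⟨h1, h2⟩ | ⟨h1, h2⟩
    · exact Or.inl ⟨h1 ▸ hu, h2 ▸ hw⟩
    · exact Or.inr ⟨h2 ▸ hu, h1 ▸ hw⟩
  have hpartD : ∀ x ∈ D', ∃ ℓ, x ∈ Dj ℓ := by
    intro x hx
    rw [hDcover] at hx
    obtain ⟨ℓ, -, hℓ⟩ := Finset.mem_biUnion.1 hx
    exact ⟨ℓ, hℓ⟩
  have hHcross : ∀ (a b : Fin k) (j ℓ : Fin m), j ≠ ℓ → f' a ∈ Dj j → f' b ∈ Dj ℓ →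
      h a ≠ h b := by
    intro a b j ℓ hjl ha hb hhab
    have hfa : fj j a = f' a := (hfjc j a).1 (Finset.mem_union_left _ ha)
    have hsa : sj j a ∈ C.bag (i-1) (f' a) := by
      have := ((hsj j).1 a).2 (by rw [hfa]; exact ha)
      rwa [hfa] at this
    have hsa1 : sj j a ∈ (C.seq 1).verts := hbag_sub1' _ (hTjv j (hDjTj j ha)) hsa
    have hbIn : f' b ∈ D' \ Dj j := Finset.mem_sdiff.2
      ⟨hDj_D' ℓ hb, fun hmem => Finset.disjoint_left.1 (hDj_disj j ℓ hjl) hmem hb⟩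
    have hfb : fj j b = h b := (hfjc j b).2 hbIn
    have hsb : sj j b = h b := by
      rw [((hsj j).1 b).1 (by rw [hfb]; exact hhmemVj j b hbIn), hfb]
    have heqj : sj j a = sj j b := ((hsj j).2.1 a b).2 hhab
    rw [hsb] at heqj
    exact (hhnotverts b j hbIn).1 (heqj ▸ hsa1)
  have hHVv : ∀ (b : Fin k) (j ℓ : Fin m), j ≠ ℓ → f' b ∈ Dj ℓ → h b ∉ Vv := by
    intro b j ℓ hjl hb hhb
    obtain ⟨c, hc⟩ := hfsurj (h b) (Finset.mem_union_right _ hhb)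
    have hcV : f c ∈ Vv := hc ▸ hhb
    obtain ⟨hf'c, hjs, -⟩ := hcaseV c hcV
    have hbIn : f' b ∈ D' \ Dj j := Finset.mem_sdiff.2
      ⟨hDj_D' ℓ hb, fun hmem => Finset.disjoint_left.1 (hDj_disj j ℓ hjl) hmem hb⟩
    have hfb : fj j b = h b := (hfjc j b).2 hbIn
    have hsb : sj j b = h b := by
      rw [((hsj j).1 b).1 (by rw [hfb]; exact hhmemVj j b hbIn), hfb]
    have hsc : sj j c = h b := by rw [(hjs j).2, hc]
    have hcb : h c = h b := ((hsj j).2.1 c b).1 (hsc.trans hsb.symm)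
    have hsbl : sj ℓ b ∈ C.bag (i-1) (f' b) := by
      have hfbl : fj ℓ b = f' b := (hfjc ℓ b).1 (Finset.mem_union_left _ hb)
      have := ((hsj ℓ).1 b).2 (by rw [hfbl]; exact hb)
      rwa [hfbl] at this
    have hsb1 : sj ℓ b ∈ (C.seq 1).verts := hbag_sub1' _ (hTjv ℓ (hDjTj ℓ hb)) hsbl
    have hscl : sj ℓ c = h b := by rw [(hjs ℓ).2, hc]
    have hne2 : sj ℓ c ≠ sj ℓ b := by
      rw [hscl]
      exact fun hh => hVv1 _ hhb (hh ▸ hsb1)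
    exact hne2 (((hsj ℓ).2.1 c b).2 hcb)
  have hHVv' : ∀ (a : Fin k) (j : Fin m), f' a ∈ D' \ Dj j → h a ∉ Vv := by
    intro a j ha
    obtain ⟨ℓ, hℓ⟩ := hpartD _ (Finset.mem_sdiff.1 ha).1
    have hne : j ≠ ℓ := fun hh => (Finset.mem_sdiff.1 ha).2 (hh ▸ hℓ)
    exact hHVv a j ℓ hne hℓ
  have hHEQ : ∀ (a b : Fin k), f' a ∈ D' → f' b ∈ D' → h a = h b → f' a = f' b := by
    intro a b ha hb hab
    obtain ⟨j, hj⟩ := hpartD _ ha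
    obtain ⟨ℓ, hℓ⟩ := hpartD _ hb
    by_cases hjl : j = ℓ
    · subst hjl
      have hfa : fj j a = f' a := (hfjc j a).1 (Finset.mem_union_left _ hj)
      have hfb : fj j b = f' b := (hfjc j b).1 (Finset.mem_union_left _ hℓ)
      have hsa : sj j a ∈ C.bag (i-1) (f' a) := by
        have := ((hsj j).1 a).2 (by rw [hfa]; exact hj)
        rwa [hfa] at this
      have hsb : sj j b ∈ C.bag (i-1) (f' b) := by
        have := ((hsj j).1 b).2 (by rw [hfb]; exact hℓ)
        rwa [hfb] at this
      have heqs : sj j a = sj j b := ((hsj j).2.1 a b).2 hab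
      exact huniq _ (hD'verts ha) _ (hD'verts hb) (sj j a) hsa (heqs ▸ hsb)
    · exact absurd hab (hHcross a b j ℓ hjl hj hℓ)
  -- glue map gl : vertices of G_{i-1} in newT to their image in G_i
  have hTj_subnew : ∀ j, Tj j ⊆ newT C i T := fun j => by
    rw [hTcover]; exact Finset.subset_biUnion_of_mem Tj (Finset.mem_univ j)
  set gl : α → α := fun u => if u = C.cu i ∨ u = C.cv i then C.cw i else u with hgl_def
  have hcuVvT : C.cu i ∉ Vv ∪ T := by
    intro hmem
    rcases Finset.mem_union.1 hmem with hh | hh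
    · exact hVvim1 _ hh hc1
    · exact hcui (hTsub hh)
  have hcvVvT : C.cv i ∉ Vv ∪ T := by
    intro hmem
    rcases Finset.mem_union.1 hmem with hh | hh
    · exact hVvim1 _ hh hc2
    · exact hcvi (hTsub hh)
  have hcwVv : C.cw i ∉ Vv := fun hh => hVvii _ hh hcwvi
  have hglT : ∀ u₀ ∈ newT C i T, gl u₀ ∈ T ∧ C.bag (i-1) u₀ ⊆ C.bag i (gl u₀) := by
    intro u₀ hu₀
    by_cases hc : u₀ = C.cu i ∨ u₀ = C.cv i
    · have hglw : gl u₀ = C.cw i := by rw [hgl_def]; exact if_pos hc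
      rw [hglw]
      refine ⟨hv, ?_⟩
      rw [hstepbag _, if_pos rfl]
      rcases hc with hh | hh
      · rw [hh]; exact Finset.subset_union_left
      · rw [hh]; exact Finset.subset_union_right
    · have hgle : gl u₀ = u₀ := by rw [hgl_def]; exact if_neg hc
      have hu₀T : u₀ ∈ T := by
        rcases Finset.mem_union.1 hu₀ with hh | hh
        · exact Finset.mem_of_mem_erase hh
        · exfalso
          rcases Finset.mem_insert.1 hh with h' | h'
          · exact hc (Or.inl h')
          · exact hc (Or.inr (Finset.mem_singleton.1 h'))
      have hu₀cw : u₀ ≠ C.cw i := fun hh => hcwmem (hh ▸ hnewT_sub hu₀)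
      rw [hgle]
      refine ⟨hu₀T, ?_⟩
      rw [hstepbag u₀, if_neg hu₀cw]
  have hglmem : ∀ u₀ ∈ newT C i T, gl u₀ ∈ (C.seq i).verts := fun u₀ hh => hTsub (hglT u₀ hh).1
  have hglob_uniq : ∀ u₀ ∈ newT C i T, ∀ u ∈ T, ∀ x : α,
      x ∈ C.bag (i-1) u₀ → x ∈ C.bag i u → u = gl u₀ := by
    intro u₀ hu₀ u huT x hx hxu
    exact huniqi u (hTsub huT) (gl u₀) (hglmem u₀ hu₀) x hxu ((hglT u₀ hu₀).2 hx)
  -- core edge-set transfer lemmas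
  have hcore1 : ∀ (j : Fin m), ∀ p ∈ Vv, ∀ q ∈ Vv, (s(p,q) ∈ Ej j ↔ s(p,q) ∈ E) := by
    intro j p hp q hq
    constructor
    · intro he
      rcases (hEj j _).1 he with ⟨hep, -⟩ | ⟨u', a', hea, -, haD, -⟩ | ⟨a', b', hea, -, haD', hbD'⟩
      · rcases (hEprime_mem _).1 hep with ⟨heE, -⟩ | ⟨w, hcwE, heq⟩
        · exact heE
        · exfalso
          rcases heq with hh | hh <;> rw [Sym2.eq_iff] at hh
          · rcases hh with ⟨h1, -⟩ | ⟨-, h2⟩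
            · exact hVvim1 _ (h1 ▸ hp) hc1
            · exact hVvim1 _ (h2 ▸ hq) hc1
          · rcases hh with ⟨h1, -⟩ | ⟨-, h2⟩
            · exact hVvim1 _ (h1 ▸ hp) hc2
            · exact hVvim1 _ (h2 ▸ hq) hc2
      · exfalso
        rw [Sym2.eq_iff] at hea
        rcases hea with ⟨-, h2⟩ | ⟨h1, -⟩
        · exact hHVv' a' j haD (h2 ▸ hq)
        · exact hHVv' a' j haD (h1 ▸ hp)
      · exfalso
        rw [Sym2.eq_iff] at hea
        rcases hea with ⟨h1, -⟩ | ⟨h1, -⟩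
        · exact hHVv' a' j haD' (h1 ▸ hp)
        · exact hHVv' b' j hbD' (h1 ▸ hp)
    · intro he
      refine (hEj j _).2 (Or.inl ⟨(hEprime_mem _).2 (Or.inl ⟨he, ?_⟩), ?_⟩)
      · intro x hx
        rcases Sym2.mem_iff.1 hx with rfl | rfl
        · exact Finset.mem_union_right _ hp
        · exact Finset.mem_union_right _ hq
      · intro x hx
        rcases Sym2.mem_iff.1 hx with rfl | rfl
        · exact Finset.mem_union_left _ hp
        · exact Finset.mem_union_left _ hq
  have hcore2 : ∀ (j : Fin m), ∀ u₀ ∈ Tj j, ∀ p ∈ Vv,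
      (s(u₀, p) ∈ Ej j ↔ s(gl u₀, p) ∈ E) := by
    intro j u₀ hu₀ p hp
    have hu₀new : u₀ ∈ newT C i T := hTj_subnew j hu₀
    have hu₀v : u₀ ∈ (C.seq (i-1)).verts := hTjv j hu₀
    constructor
    · intro he
      rcases (hEj j _).1 he with ⟨hep, -⟩ | ⟨u', a', hea, -, haD, -⟩ | ⟨a', b', hea, -, haD', hbD'⟩
      · rcases (hEprime_mem _).1 hep with ⟨heE, -⟩ | ⟨w, hcwE, heq⟩
        · have hglno : gl u₀ = u₀ := by
            rw [hgl_def]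
            refine if_neg ?_
            rintro (hh | hh) <;> subst hh
            · rcases hEmem _ _ heE with ⟨hmem, -⟩ | ⟨-, hmem⟩
              · exact hcuVvT hmem
              · exact hVvim1 _ hmem hc1
            · rcases hEmem _ _ heE with ⟨hmem, -⟩ | ⟨-, hmem⟩
              · exact hcvVvT hmem
              · exact hVvim1 _ hmem hc2
          rw [hglno]; exact heE
        · rcases heq with hh | hh <;> rw [Sym2.eq_iff] at hh
          · rcases hh with ⟨h1, h2⟩ | ⟨h1, h2⟩
            · have hglw : gl u₀ = C.cw i := by rw [hgl_def]; exact if_pos (Or.inl h1)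
              rw [hglw, h2]; exact hcwE
            · exact absurd (by rw [h2]; exact hc1) (hVvim1 _ hp)
          · rcases hh with ⟨h1, h2⟩ | ⟨h1, h2⟩
            · have hglw : gl u₀ = C.cw i := by rw [hgl_def]; exact if_pos (Or.inr h1)
              rw [hglw, h2]; exact hcwE
            · exact absurd (by rw [h2]; exact hc2) (hVvim1 _ hp)
      · exfalso
        rw [Sym2.eq_iff] at hea
        rcases hea with ⟨-, h2⟩ | ⟨h1, -⟩
        · exact hHVv' a' j haD (h2 ▸ hp)
        · exact (hhnotverts a' j haD).2 (h1 ▸ hu₀v)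
      · exfalso
        rw [Sym2.eq_iff] at hea
        rcases hea with ⟨h1, -⟩ | ⟨h1, -⟩
        · exact (hhnotverts a' j haD').2 (h1 ▸ hu₀v)
        · exact (hhnotverts b' j hbD').2 (h1 ▸ hu₀v)
    · intro he
      by_cases hc : u₀ = C.cu i ∨ u₀ = C.cv i
      · have hglw : gl u₀ = C.cw i := by rw [hgl_def]; exact if_pos hc
        rw [hglw] at he
        refine (hEj j _).2 (Or.inl ⟨(hEprime_mem _).2 (Or.inr ⟨p, he, ?_⟩), ?_⟩)
        · rcases hc with hh | hh
          · exact Or.inl (by rw [hh])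
          · exact Or.inr (by rw [hh])
        · intro x hx
          rcases Sym2.mem_iff.1 hx with rfl | rfl
          · exact Finset.mem_union_right _ hu₀
          · exact Finset.mem_union_left _ hp
      · have hglno : gl u₀ = u₀ := by rw [hgl_def]; exact if_neg hc
        rw [hglno] at he
        refine (hEj j _).2 (Or.inl ⟨(hEprime_mem _).2 (Or.inl ⟨he, ?_⟩), ?_⟩)
        · intro x hx
          rcases Sym2.mem_iff.1 hx with rfl | rfl
          · exact Finset.mem_union_left _ hu₀new
          · exact Finset.mem_union_right _ hp
        · intro x hx
          rcases Sym2.mem_iff.1 hx with rfl | rfl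
          · exact Finset.mem_union_right _ hu₀
          · exact Finset.mem_union_left _ hp
  have hcore3 : ∀ (j : Fin m) (b : Fin k), f' b ∈ D' \ Dj j → ∀ u₀ ∈ Tj j,
      (s(u₀, h b) ∈ Ej j ↔ (C.seq (i-1)).black u₀ (f' b)) := by
    intro j b hbD u₀ hu₀
    have hu₀v : u₀ ∈ (C.seq (i-1)).verts := hTjv j hu₀
    have hf'bv : f' b ∈ (C.seq (i-1)).verts := hD'verts (Finset.mem_sdiff.1 hbD).1
    constructor
    · intro he
      rcases (hEj j _).1 he with ⟨-, hend⟩ | ⟨u', a', hea, -, haD, hcond⟩ |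
        ⟨a', b', hea, -, haD', hbD'⟩
      · exfalso
        have hmem := hend (h b) (Sym2.mem_mk_right _ _)
        rcases Finset.mem_union.1 hmem with hh | hh
        · exact hHVv' b j hbD hh
        · exact (hhnotverts b j hbD).2 (hTjv j hh)
      · rw [Sym2.eq_iff] at hea
        rcases hea with ⟨h1, h2⟩ | ⟨h1, h2⟩
        · have hf'eq : f' a' = f' b :=
            hHEQ a' b (Finset.mem_sdiff.1 haD).1 (Finset.mem_sdiff.1 hbD).1 h2.symm
          rcases hcond with hcEp | hcB
          · exfalso
            rcases (hEprime_mem _).1 hcEp with ⟨heE, -⟩ | ⟨w, hcwE, heq⟩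
            · rcases hEmem _ _ heE with ⟨-, hmem⟩ | ⟨-, hmem⟩
              · exact hVvim1 _ hmem (by rw [hf'eq]; exact hf'bv)
              · exact hVvim1 _ hmem (by rw [← h1]; exact hu₀v)
            · have hwVv : w ∈ Vv := by
                rcases hEmem _ _ hcwE with ⟨-, hmem⟩ | ⟨-, hmem⟩
                · exact hmem
                · exact absurd hmem hcwVv
              rcases heq with hh | hh <;> rw [Sym2.eq_iff] at hh
              · rcases hh with ⟨-, h4⟩ | ⟨h3, -⟩
                · exact hVvim1 (f' a') (by rw [h4]; exact hwVv) (by rw [hf'eq]; exact hf'bv)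
                · exact hVvim1 u₀ (by rw [h1, h3]; exact hwVv) hu₀v
              · rcases hh with ⟨-, h4⟩ | ⟨h3, -⟩
                · exact hVvim1 (f' a') (by rw [h4]; exact hwVv) (by rw [hf'eq]; exact hf'bv)
                · exact hVvim1 u₀ (by rw [h1, h3]; exact hwVv) hu₀v
          · rw [← h1, hf'eq] at hcB
            exact hcB
        · exact absurd (h1 ▸ hu₀v) (hhnotverts a' j haD).2
      · exfalso
        rw [Sym2.eq_iff] at hea
        rcases hea with ⟨h1, -⟩ | ⟨h1, -⟩
        · exact (hhnotverts a' j haD').2 (h1 ▸ hu₀v)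
        · exact (hhnotverts b' j hbD').2 (h1 ▸ hu₀v)
    · intro hb
      exact (hEj j _).2 (Or.inr (Or.inl
        ⟨u₀, b, rfl, Finset.mem_union_right _ hu₀, hbD, Or.inr hb⟩))
  -- full adjacency equivalences
  have hA1 : ∀ (j : Fin m) {x y : α}, x ∈ C.bags (i-1) (Tj j) → y ∈ C.bags (i-1) (Tj j) →
      (expAdj C i T Vv E x y ↔ expAdj C (i-1) (Tj j) (Vj j) (Ej j) x y) := by
    intro j x y hx hy
    rw [expAdj_real_real C i T Vv E hbags_sub1 hVv1 (hbagsTj_subT j hx) (hbagsTj_subT j hy),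
        expAdj_real_real C (i-1) (Tj j) (Vj j) (Ej j) (hbagsTj_sub1 j)
          (fun p hp => (hVjnverts j p hp).1) hx hy]
  have hA2 : ∀ (j : Fin m) {x p : α}, x ∈ C.bags (i-1) (Tj j) → p ∈ Vv →
      (expAdj C i T Vv E x p ↔ expAdj C (i-1) (Tj j) (Vj j) (Ej j) x p) := by
    intro j x p hx hp
    obtain ⟨u₀, hu₀, hx0⟩ := (hmemb _ _ _).1 hx
    have hu₀new : u₀ ∈ newT C i T := hTj_subnew j hu₀
    rw [expAdj_real_virt C i T Vv E hbags_sub1 hVv1 (hbagsTj_subT j hx) hp,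
        expAdj_real_virt C (i-1) (Tj j) (Vj j) (Ej j) (hbagsTj_sub1 j)
          (fun q hq => (hVjnverts j q hq).1) hx (hVvsubVj j hp)]
    constructor
    · rintro ⟨u, huT, hxu, heE⟩
      have hueq : u = gl u₀ := hglob_uniq u₀ hu₀new u huT x hx0 hxu
      exact ⟨u₀, hu₀, hx0, (hcore2 j u₀ hu₀ p hp).2 (hueq ▸ heE)⟩
    · rintro ⟨u', hu', hxu', heEj⟩
      have hueq : u' = u₀ := huniq u' (hTjv j hu') u₀ (hTjv j hu₀) x hxu' hx0
      refine ⟨gl u₀, (hglT u₀ hu₀new).1, (hglT u₀ hu₀new).2 hx0, ?_⟩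
      exact (hcore2 j u₀ hu₀ p hp).1 (hueq ▸ heEj)
  have hA3 : ∀ (j : Fin m) (b : Fin k), f' b ∈ D' \ Dj j → ∀ {x y : α},
      x ∈ C.bags (i-1) (Tj j) → y ∈ C.bag (i-1) (f' b) →
      (expAdj C i T Vv E x y ↔ expAdj C (i-1) (Tj j) (Vj j) (Ej j) x (h b)) := by
    intro j b hbD x y hx hy
    have hf'D' : f' b ∈ D' := (Finset.mem_sdiff.1 hbD).1
    have hyT : y ∈ C.bags i T := by
      rw [hbagsTeq]
      exact (hmemb _ _ _).2 ⟨f' b, hD'newT hf'D', hy⟩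
    obtain ⟨ℓ, hℓ⟩ := hpartD _ hf'D'
    have hjℓ : j ≠ ℓ := fun hh => (Finset.mem_sdiff.1 hbD).2 (hh ▸ hℓ)
    obtain ⟨u₀, hu₀, hx0⟩ := (hmemb _ _ _).1 hx
    rw [expAdj_real_real C i T Vv E hbags_sub1 hVv1 (hbagsTj_subT j hx) hyT,
        expAdj_real_virt C (i-1) (Tj j) (Vj j) (Ej j) (hbagsTj_sub1 j)
          (fun q hq => (hVjnverts j q hq).1) hx (hhmemVj j b hbD)]
    have hne : u₀ ≠ f' b := fun hh =>
      Finset.disjoint_left.1 (hTdisj j ℓ hjℓ) hu₀ (hh ▸ hDjTj ℓ hℓ)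
    have hnr : ¬ (C.seq (i-1)).red u₀ (f' b) := hnored j ℓ hjℓ u₀ hu₀ (f' b) hℓ
    rw [hblack_iff u₀ (hTjv j hu₀) (f' b) (hD'verts hf'D') hne hnr x hx0 y hy]
    constructor
    · intro hb
      exact ⟨u₀, hu₀, hx0, (hcore3 j b hbD u₀ hu₀).2 hb⟩
    · rintro ⟨u', hu', hxu', heEj⟩
      have hueq : u' = u₀ := huniq u' (hTjv j hu') u₀ (hTjv j hu₀) x hxu' hx0
      exact (hcore3 j b hbD u₀ hu₀).1 (hueq ▸ heEj)
  have hA4 : ∀ (j : Fin m) {p q : α}, p ∈ Vv → q ∈ Vv →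
      (expAdj C i T Vv E p q ↔ expAdj C (i-1) (Tj j) (Vj j) (Ej j) p q) := by
    intro j p q hp hq
    rw [expAdj_virt_virt C i T Vv E hbags_sub1 hVv1 hp hq,
        expAdj_virt_virt C (i-1) (Tj j) (Vj j) (Ej j) (hbagsTj_sub1 j)
          (fun r hr => (hVjnverts j r hr).1) (hVvsubVj j hp) (hVvsubVj j hq)]
    exact (hcore1 j p hp q hq).symm
  -- condition 2
  have heqv : ∀ a b : Fin k, (ss a = ss b ↔ h a = h b) := by
    intro a b
    rcases hDV a with ⟨haD, -⟩ | ⟨haV, -⟩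
    · obtain ⟨j₀, hj₀, haD', hfj₀, hsa, hbag_a, hother_a⟩ := hcaseD a haD
      rcases hDV b with ⟨hbD, -⟩ | ⟨hbV, -⟩
      · obtain ⟨ℓ₀, hℓ₀, hbD', hfℓ₀, hsb, hbag_b, hother_b⟩ := hcaseD b hbD
        by_cases hjl : j₀ = ℓ₀
        · subst hjl
          rw [hsa, hsb]
          exact (hsj j₀).2.1 a b
        · constructor
          · intro hEq
            exfalso
            rw [hsa, hsb] at hEq
            have hfne : f' a ≠ f' b := fun hh =>
              Finset.disjoint_left.1 (hDj_disj j₀ ℓ₀ hjl) hj₀ (hh ▸ hℓ₀)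
            have hbag_b' : sj j₀ a ∈ C.bag (i-1) (f' b) := by rw [hEq]; exact hbag_b
            exact hfne (huniq (f' a) (hD'verts haD') (f' b) (hD'verts hbD')
              (sj j₀ a) hbag_a hbag_b')
          · intro hhab
            exact absurd hhab (hHcross a b j₀ ℓ₀ hjl hj₀ hℓ₀)
      · obtain ⟨-, hjsb, hsb⟩ := hcaseV b hbV
        have hgoal := (hsj j₀).2.1 a b
        rw [(hjsb j₀).2] at hgoal
        rw [hsa, hsb]
        exact hgoal
    · obtain ⟨-, hjsa, hsa⟩ := hcaseV a haV
      rcases hDV b with ⟨hbD, -⟩ | ⟨hbV, -⟩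
      · obtain ⟨ℓ₀, hℓ₀, hbD', hfℓ₀, hsb, hbag_b, hother_b⟩ := hcaseD b hbD
        have hgoal := (hsj ℓ₀).2.1 a b
        rw [(hjsa ℓ₀).2] at hgoal
        rw [hsa, hsb]
        exact hgoal
      · obtain ⟨-, hjsb, hsb⟩ := hcaseV b hbV
        have hgoal := (hsj ⟨0,hm⟩).2.1 a b
        rw [(hjsa ⟨0,hm⟩).2, (hjsb ⟨0,hm⟩).2] at hgoal
        rw [hsa, hsb]
        exact hgoal
  -- condition 3
  have hcond3 : ∀ a b : Fin k, (expAdj C i T Vv E (ss a) (ss b) ↔ s(h a, h b) ∈ HE) := by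
    intro a b
    rcases hDV a with ⟨haD, -⟩ | ⟨haV, -⟩
    · obtain ⟨j₀, hj₀, haD', hfj₀, hsa, hbag_a, hother_a⟩ := hcaseD a haD
      have hmem_a : ss a ∈ C.bags (i-1) (Tj j₀) := by
        rw [hsa]; exact (hmemb _ _ _).2 ⟨f' a, hDjTj j₀ hj₀, hbag_a⟩
      rcases hDV b with ⟨hbD, -⟩ | ⟨hbV, -⟩
      · obtain ⟨ℓ₀, hℓ₀, hbD', hfℓ₀, hsb, hbag_b, hother_b⟩ := hcaseD b hbD
        by_cases hjl : ℓ₀ = j₀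
        · subst hjl
          have hmem_b : ss b ∈ C.bags (i-1) (Tj ℓ₀) := by
            rw [hsb]; exact (hmemb _ _ _).2 ⟨f' b, hDjTj ℓ₀ hℓ₀, hbag_b⟩
          rw [hA1 ℓ₀ hmem_a hmem_b, hsa, hsb]
          exact (hsj ℓ₀).2.2 a b
        · have hne : j₀ ≠ ℓ₀ := fun hh => hjl hh.symm
          have hbcross : f' b ∈ D' \ Dj j₀ := (hother_b j₀ hne).2.2
          have hbagy : ss b ∈ C.bag (i-1) (f' b) := by rw [hsb]; exact hbag_b
          have hsb' : sj j₀ b = h b := (hother_b j₀ hne).2.1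
          have hgoal := (hsj j₀).2.2 a b
          rw [hsb'] at hgoal
          rw [hA3 j₀ b hbcross hmem_a hbagy, hsa]
          exact hgoal
      · obtain ⟨-, hjsb, hsb⟩ := hcaseV b hbV
        have hgoal := (hsj j₀).2.2 a b
        rw [(hjsb j₀).2] at hgoal
        rw [hsb, hA2 j₀ hmem_a hbV, hsa]
        exact hgoal
    · obtain ⟨-, hjsa, hsa⟩ := hcaseV a haV
      rcases hDV b with ⟨hbD, -⟩ | ⟨hbV, -⟩
      · obtain ⟨ℓ₀, hℓ₀, hbD', hfℓ₀, hsb, hbag_b, hother_b⟩ := hcaseD b hbD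
        have hmem_b : ss b ∈ C.bags (i-1) (Tj ℓ₀) := by
          rw [hsb]; exact (hmemb _ _ _).2 ⟨f' b, hDjTj ℓ₀ hℓ₀, hbag_b⟩
        have hgoal := (hsj ℓ₀).2.2 a b
        rw [(hjsa ℓ₀).2] at hgoal
        rw [expAdj_comm C i T Vv E, hsa, hA2 ℓ₀ hmem_b haV,
            expAdj_comm C (i-1) (Tj ℓ₀) (Vj ℓ₀) (Ej ℓ₀), hsb]
        exact hgoal
      · obtain ⟨-, hjsb, hsb⟩ := hcaseV b hbV
        have hgoal := (hsj ⟨0,hm⟩).2.2 a b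
        rw [(hjsa ⟨0,hm⟩).2, (hjsb ⟨0,hm⟩).2] at hgoal
        rw [hsa, hsb, hA4 ⟨0,hm⟩ haV hbV]
        exact hgoal
  -- condition 1
  have hcond1 : ∀ a : Fin k, (f a ∈ Vv → ss a = f a) ∧ (f a ∈ D → ss a ∈ C.bag i (f a)) := by
    intro a
    constructor
    · intro hfa
      exact (hcaseV a hfa).2.2
    · intro hfa
      obtain ⟨j₀, hj₀, hf'D', hfj₀, hs_eq, hbg, -⟩ := hcaseD a hfa
      rw [hs_eq, hstepbag (f a)]
      by_cases hcw : f a = C.cw i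
      · rw [if_pos hcw]
        rcases (hf' a).1 hcw with hh | hh
        · refine Finset.mem_union_left _ ?_
          rw [← hh]; exact hbg
        · refine Finset.mem_union_right _ ?_
          rw [← hh]; exact hbg
      · rw [if_neg hcw, ← (hf' a).2 hcw]
        exact hbg
  -- atom transfer for the value computation
  have hequ : ∀ (j : Fin m) (u : α), u ∈ C.bags (i-1) (Tj j) → ∀ a : Fin k,
      (ss a = u ↔ sj j a = u) := by
    intro j u hu a
    have hu1 : u ∈ (C.seq 1).verts := hbagsTj_sub1 j hu
    rcases hDV a with ⟨haD, -⟩ | ⟨haV, -⟩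
    · obtain ⟨j₀, hj₀, haD', hfj₀, hsa, hbag_a, hother_a⟩ := hcaseD a haD
      by_cases hjj : j = j₀
      · subst hjj; rw [hsa]
      · rw [hsa, (hother_a j hjj).2.1]
        constructor
        · intro hEq
          exfalso
          obtain ⟨w, hw, hwu⟩ := (hmemb _ _ _).1 hu
          have hweq : w = f' a := huniq w (hTjv j hw) (f' a) (hD'verts haD') u hwu
            (by rw [← hEq]; exact hbag_a)
          exact Finset.disjoint_left.1 (hTdisj j j₀ hjj)
            (by rw [← hweq]; exact hw) (hDjTj j₀ hj₀)
        · intro hEq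
          exact ((hEq ▸ (hhnotverts a j (hother_a j hjj).2.2).1) hu1).elim
    · obtain ⟨-, hjsa, hsa⟩ := hcaseV a haV
      rw [hsa, ← (hjsa j).2]
  have hadjv : ∀ (j : Fin m) (u : α), u ∈ C.bags (i-1) (Tj j) → ∀ a : Fin k,
      (expAdj C i T Vv E (ss a) u ↔ expAdj C (i-1) (Tj j) (Vj j) (Ej j) (sj j a) u) := by
    intro j u hu a
    rcases hDV a with ⟨haD, -⟩ | ⟨haV, -⟩
    · obtain ⟨j₀, hj₀, haD', hfj₀, hsa, hbag_a, hother_a⟩ := hcaseD a haD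
      by_cases hjj : j = j₀
      · subst hjj
        have hmem_a : ss a ∈ C.bags (i-1) (Tj j) := by
          rw [hsa]; exact (hmemb _ _ _).2 ⟨f' a, hDjTj j hj₀, hbag_a⟩
        rw [hA1 j hmem_a hu, hsa]
      · have hacross : f' a ∈ D' \ Dj j := (hother_a j hjj).2.2
        have hbaga : ss a ∈ C.bag (i-1) (f' a) := by rw [hsa]; exact hbag_a
        have hgoal : expAdj C i T Vv E (ss a) u ↔
            expAdj C (i-1) (Tj j) (Vj j) (Ej j) (h a) u := by
          rw [expAdj_comm C i T Vv E, hA3 j a hacross hu hbaga,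
              expAdj_comm C (i-1) (Tj j) (Vj j) (Ej j)]
        rw [(hother_a j hjj).2.1]
        exact hgoal
    · obtain ⟨-, hjsa, hsa⟩ := hcaseV a haV
      rw [(hjsa j).2, hsa]
      rw [expAdj_comm C i T Vv E, hA2 j hu haV, expAdj_comm C (i-1) (Tj j) (Vj j) (Ej j)]
  have hsat : ∀ (j : Fin m) (u : α), u ∈ C.bags (i-1) (Tj j) → ∀ φ : QF k,
      (QF.Sat (expAdj C i T Vv E) (Fin.snoc ss u) φ ↔
       QF.Sat (expAdj C (i-1) (Tj j) (Vj j) (Ej j)) (Fin.snoc (sj j) u) φ) := by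
    intro j u hu φ
    refine QF.Sat_congr ?_ ?_ φ
    · intro ξ η
      induction ξ using Fin.lastCases with
      | last =>
        induction η using Fin.lastCases with
        | last => simp
        | cast b =>
          simp only [Fin.snoc_last, Fin.snoc_castSucc]
          constructor
          · intro hh; exact ((hequ j u hu b).1 hh.symm).symm
          · intro hh; exact ((hequ j u hu b).2 hh.symm).symm
      | cast a =>
        induction η using Fin.lastCases with
        | last =>
          simp only [Fin.snoc_last, Fin.snoc_castSucc]
          exact hequ j u hu a
        | cast b =>
          simp only [Fin.snoc_castSucc]
          rw [heqv a b, ← ((hsj j).2.1 a b)]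
    · intro ξ η
      induction ξ using Fin.lastCases with
      | last =>
        induction η using Fin.lastCases with
        | last =>
          simp only [Fin.snoc_last]
          exact hA1 j hu hu
        | cast b =>
          simp only [Fin.snoc_last, Fin.snoc_castSucc]
          rw [expAdj_comm C i T Vv E, hadjv j u hu b,
              expAdj_comm C (i-1) (Tj j) (Vj j) (Ej j)]
      | cast a =>
        induction η using Fin.lastCases with
        | last =>
          simp only [Fin.snoc_last, Fin.snoc_castSucc]
          exact hadjv j u hu a
        | cast b =>
          simp only [Fin.snoc_castSucc]
          exact (hcond3 a b).trans ((hsj j).2.2 a b).symm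
  -- the value computation
  have hbags_disj : ∀ (j ℓ : Fin m), j ≠ ℓ →
      Disjoint (C.bags (i-1) (Tj j)) (C.bags (i-1) (Tj ℓ)) := by
    intro j ℓ hne
    rw [Finset.disjoint_left]
    intro x hxj hxl
    obtain ⟨u, hu, hxu⟩ := (hmemb _ _ _).1 hxj
    obtain ⟨w, hw, hxw⟩ := (hmemb _ _ _).1 hxl
    have heqw : u = w := huniq u (hTjv j hu) w (hTjv ℓ hw) x hxu hxw
    exact Finset.disjoint_left.1 (hTdisj j ℓ hne) hu (by rw [heqw]; exact hw)
  have hone : ∀ (P : α → Prop) (S : Finset α),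
      Set.ncard {u : α | u ∈ S ∧ P u} = (S.filter P).card := by
    intro P S
    rw [show {u : α | u ∈ S ∧ P u} = ↑(S.filter P) by
      ext x; simp [Finset.mem_filter]]
    exact Set.ncard_coe_finset _
  have hperI : ∀ aI : I, Set.ncard {u : α | u ∈ C.bags i T ∧
      QF.Sat (expAdj C i T Vv E) (Fin.snoc ss u) (ψ aI)} =
      ∑ j, ((C.bags (i-1) (Tj j)).filter
        (fun u => QF.Sat (expAdj C (i-1) (Tj j) (Vj j) (Ej j)) (Fin.snoc (sj j) u)
          (ψ aI))).card := by
    intro aI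
    refine (hone _ _).trans ?_
    rw [hbagsTeq, hbags_biUnion, Finset.filter_biUnion]
    rw [Finset.card_biUnion
      (fun j _ ℓ _ hne => Finset.disjoint_filter_filter (hbags_disj j ℓ hne))]
    refine Finset.sum_congr rfl (fun j _ => ?_)
    exact congrArg Finset.card (Finset.filter_congr (fun u hu => hsat j u hu (ψ aI)))
  have hvalue : vValue ψ C i T Vv E ss = ∑ j, νj j := by
    unfold vValue
    calc (∑ aI : I, Set.ncard {u : α | u ∈ C.bags i T ∧
            QF.Sat (expAdj C i T Vv E) (Fin.snoc ss u) (ψ aI)})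
        = ∑ aI : I, ∑ j, ((C.bags (i-1) (Tj j)).filter
            (fun u => QF.Sat (expAdj C (i-1) (Tj j) (Vj j) (Ej j)) (Fin.snoc (sj j) u)
              (ψ aI))).card := Finset.sum_congr rfl (fun aI _ => hperI aI)
      _ = ∑ j, ∑ aI : I, ((C.bags (i-1) (Tj j)).filter
            (fun u => QF.Sat (expAdj C (i-1) (Tj j) (Vj j) (Ej j)) (Fin.snoc (sj j) u)
              (ψ aI))).card := Finset.sum_comm
      _ = ∑ j, νj j := by
            refine Finset.sum_congr rfl (fun j _ => ?_)
            rw [hν j]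
            unfold vValue
            exact Finset.sum_congr rfl (fun aI _ => (hone _ _).symm)
  exact ⟨⟨hcond1, heqv, hcond3⟩, hvalue⟩
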